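/- For 0 < a ≤ 1 define q : [−π/2, π/2] × [0, 2π] → ℝ³ by q(u,v) = (sin(u), cos(u)cos(av), cos(u)sin(av)), whose image is contained in the unit sphere. Then for all u ∈ (−π/2, π/2) and v ∈ ℝ one has ⟨∂_u q, ∂_u q⟩ = 1, ⟨∂_u q, ∂_v q⟩ = 0 and ⟨∂_v q, ∂_v q⟩ = a² cos²(u), i.e. q has exactly the same first fundamental form du² + a² cos²(u) dv² as the parametrization r of S_a. Consequently, (u,v) ↦ (u, av) is an isometry from the half of S_a given by 0 ≤ v ≤ π onto the spherical lune Ω_a = {(sin ũ, cos ũ cos ṽ, cos ũ sin ṽ) : ũ ∈ [−π/2, π/2], ṽ ∈ [0, aπ]}, so that S_a is an isometric embedding of the double of the lune Ω_a. -/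

import Mathlib

open Real
open scoped RealInnerProductSpace

/-- The profile function `g(u) = ∫₀ᵘ √(1 - a² sin² t) dt`. -/
noncomputable def gProf (a u : ℝ) : ℝ :=
  ∫ t in (0:ℝ)..u, Real.sqrt (1 - a ^ 2 * Real.sin t ^ 2)

/-- The parametrization `r(u,v) = (g(u), a cos u cos v, a cos u sin v)` of the
surface of revolution `S_a ⊆ ℝ³`. -/
noncomputable def rSurf (a u v : ℝ) : EuclideanSpace ℝ (Fin 3) :=
  (WithLp.equiv 2 (Fin 3 → ℝ)).symm
    ![gProf a u, a * Real.cos u * Real.cos v, a * Real.cos u * Real.sin v]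

/-- The reparametrized spherical map `q(u,v) = (sin u, cos u cos(av), cos u sin(av))`. -/
noncomputable def qLune (a u v : ℝ) : EuclideanSpace ℝ (Fin 3) :=
  (WithLp.equiv 2 (Fin 3 → ℝ)).symm
    ![Real.sin u, Real.cos u * Real.cos (a * v), Real.cos u * Real.sin (a * v)]

/-- The spherical lune `Ω_a ⊆ 𝕊²` of opening angle `aπ`. -/
noncomputable def lune (a : ℝ) : Set (EuclideanSpace ℝ (Fin 3)) :=
  (fun p : ℝ × ℝ => (WithLp.equiv 2 (Fin 3 → ℝ)).symm
      ![Real.sin p.1, Real.cos p.1 * Real.cos p.2, Real.cos p.1 * Real.sin p.2]) ''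
    (Set.Icc (-(π/2)) (π/2) ×ˢ Set.Icc 0 (a*π))

lemma qLune_hasDerivAt_u (a u v : ℝ) :
    HasDerivAt (fun u' => qLune a u' v)
      ((WithLp.equiv 2 (Fin 3 → ℝ)).symm
        ![Real.cos u, -Real.sin u * Real.cos (a*v), -Real.sin u * Real.sin (a*v)]) u := by
  have h : HasDerivAt (fun u' => (![Real.sin u', Real.cos u' * Real.cos (a*v),
      Real.cos u' * Real.sin (a*v)] : Fin 3 → ℝ))
      ![Real.cos u, -Real.sin u * Real.cos (a*v), -Real.sin u * Real.sin (a*v)] u := by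
    rw [hasDerivAt_pi]
    intro i
    fin_cases i <;> simp
    · exact Real.hasDerivAt_sin u
    · simpa using (Real.hasDerivAt_cos u).mul_const (Real.cos (a*v))
    · simpa using (Real.hasDerivAt_cos u).mul_const (Real.sin (a*v))
  let e : (Fin 3 → ℝ) ≃L[ℝ] EuclideanSpace ℝ (Fin 3) := (EuclideanSpace.equiv (Fin 3) ℝ).symm
  exact e.toContinuousLinearMap.hasFDerivAt.comp_hasDerivAt u h

lemma qLune_hasDerivAt_v (a u v : ℝ) :
    HasDerivAt (fun v' => qLune a u v')
      ((WithLp.equiv 2 (Fin 3 → ℝ)).symm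
        ![0, -a * Real.cos u * Real.sin (a*v), a * Real.cos u * Real.cos (a*v)]) v := by
  have h : HasDerivAt (fun v' => (![Real.sin u, Real.cos u * Real.cos (a*v'),
      Real.cos u * Real.sin (a*v')] : Fin 3 → ℝ))
      ![0, -a * Real.cos u * Real.sin (a*v), a * Real.cos u * Real.cos (a*v)] v := by
    rw [hasDerivAt_pi]
    intro i
    have hav : HasDerivAt (fun v' : ℝ => a * v') a v := by
      simpa using (hasDerivAt_id v).const_mul a
    fin_cases i <;> simp
    · exact hasDerivAt_const v _
    · have := ((Real.hasDerivAt_cos (a*v)).comp v hav).const_mul (Real.cos u)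
      simpa [mul_comm, mul_left_comm, mul_assoc, Function.comp] using this
    · have := ((Real.hasDerivAt_sin (a*v)).comp v hav).const_mul (Real.cos u)
      simpa [mul_comm, mul_left_comm, mul_assoc, Function.comp] using this
  let e : (Fin 3 → ℝ) ≃L[ℝ] EuclideanSpace ℝ (Fin 3) := (EuclideanSpace.equiv (Fin 3) ℝ).symm
  exact e.toContinuousLinearMap.hasFDerivAt.comp_hasDerivAt v h

/-- **`S_a` is the double of the lune `Ω_a`** (Lemma 1.2 iv) of the paper): for
`0 < a ≤ 1`, the map `q(u,v) = (sin u, cos u cos(av), cos u sin(av))` takes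
values in the unit sphere, has the same first fundamental form
`du² + a² cos²(u) dv²` as the parametrization `r` of `S_a`
(`⟨q_u,q_u⟩ = 1`, `⟨q_u,q_v⟩ = 0`, `⟨q_v,q_v⟩ = a² cos² u`), and maps the
half `0 ≤ v ≤ π` of the parameter domain onto the spherical lune `Ω_a`; hence
`(u,v) ↦ (u, av)` is an isometry from half of `S_a` onto `Ω_a`, and `S_a` is an
isometric embedding of the double of `Ω_a`. -/
theorem Sa_double_of_lune (a : ℝ) (ha0 : 0 < a) (ha1 : a ≤ 1) :
    (∀ u v : ℝ, qLune a u v ∈ Metric.sphere (0 : EuclideanSpace ℝ (Fin 3)) 1) ∧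
    (∀ u ∈ Set.Ioo (-(π/2)) (π/2), ∀ v : ℝ,
      ⟪deriv (fun u' => qLune a u' v) u, deriv (fun u' => qLune a u' v) u⟫ = 1 ∧
      ⟪deriv (fun u' => qLune a u' v) u, deriv (fun v' => qLune a u v') v⟫ = 0 ∧
      ⟪deriv (fun v' => qLune a u v') v, deriv (fun v' => qLune a u v') v⟫
        = a ^ 2 * Real.cos u ^ 2) ∧
    (fun p : ℝ × ℝ => qLune a p.1 p.2) '' (Set.Icc (-(π/2)) (π/2) ×ˢ Set.Icc 0 π)
      = lune a := by
  refine ⟨?_, ?_, ?_⟩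
  · intro u v
    rw [mem_sphere_zero_iff_norm, EuclideanSpace.norm_eq]
    have : ∑ i, ‖(WithLp.equiv 2 (Fin 3 → ℝ)).symm
        ![Real.sin u, Real.cos u * Real.cos (a*v), Real.cos u * Real.sin (a*v)] i‖ ^ 2 = 1 := by
      simp [Fin.sum_univ_three, sq_abs]
      nlinarith [Real.sin_sq_add_cos_sq u, Real.sin_sq_add_cos_sq (a*v)]
    rw [qLune, this, Real.sqrt_one]
  · intro u _ v
    rw [(qLune_hasDerivAt_u a u v).deriv, (qLune_hasDerivAt_v a u v).deriv]
    refine ⟨?_, ?_, ?_⟩ <;>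
      simp [PiLp.inner_apply, Fin.sum_univ_three, EuclideanSpace.norm_sq_eq] <;>
      nlinarith [Real.sin_sq_add_cos_sq u, Real.sin_sq_add_cos_sq (a*v)]
  · ext x
    simp only [lune, Set.mem_image, Set.mem_prod, Set.mem_Icc, Prod.exists]
    constructor
    · rintro ⟨u, v, ⟨hu, hv⟩, rfl⟩
      exact ⟨u, a * v, ⟨hu, ⟨mul_nonneg ha0.le hv.1,
        mul_le_mul_of_nonneg_left hv.2 ha0.le⟩⟩, rfl⟩
    · rintro ⟨u, w, ⟨hu, hw⟩, rfl⟩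
      refine ⟨u, w / a, ⟨hu, ⟨div_nonneg hw.1 ha0.le, ?_⟩⟩, ?_⟩
      · rw [div_le_iff₀ ha0]
        linarith [hw.2]
      · simp [qLune, mul_div_cancel₀ w ha0.ne']
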